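/- Let n = 2m+1 ≥ 3 be odd and let A_n be the n×n upper-shift matrix over ℂ. Define h = ∑_{i=1}^n (−1)^{i+1} E_{ii}, and for 1 ≤ k ≤ m define e_k = ∑_{l=1}^{m−k+1} (E_{2l−1, 2k+2l−2} − E_{2k+2l−1, 2l}). Then the solution set {X ∈ M_n(ℂ) | Xᵀ A_n + A_n X = 0} equals the ℂ-linear span of {h, e_1, …, e_m}. -/

import Mathlib

open Matrix

/-- The `n × n` nilpotent upper-shift matrix `A_n`. -/
def shiftMat (n : ℕ) : Matrix (Fin n) (Fin n) ℂ :=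
  Matrix.of fun i j => if (j : ℕ) = (i : ℕ) + 1 then 1 else 0

/-- `h = ∑_{i=1}^n (-1)^{i+1} E_{ii}` (written with 0-indexed `i`). -/
noncomputable def hMat (n : ℕ) : Matrix (Fin n) (Fin n) ℂ :=
  ∑ i : Fin n, ((-1 : ℂ)) ^ (i : ℕ) • Matrix.single i i 1

/-- For `n = 2m+1` odd and `1 ≤ k ≤ m`,
`e_k = ∑_{l=1}^{m-k+1} (E_{2l-1, 2k+2l-2} - E_{2k+2l-1, 2l})` (1-indexed entries). -/
noncomputable def eMatOdd (m k : ℕ) : Matrix (Fin (2 * m + 1)) (Fin (2 * m + 1)) ℂ :=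
  if h : 1 ≤ k ∧ k ≤ m then
    ∑ l : Fin (m - k + 1),
      (Matrix.single
          (⟨2 * l.1, by have := l.2; omega⟩ : Fin (2 * m + 1))
          (⟨2 * k + 2 * l.1 - 1, by have := l.2; omega⟩ : Fin (2 * m + 1)) 1 -
        Matrix.single
          (⟨2 * k + 2 * l.1, by have := l.2; omega⟩ : Fin (2 * m + 1))
          (⟨2 * l.1 + 1, by have := l.2; omega⟩ : Fin (2 * m + 1)) 1)
  else 0

lemma mul_shift_apply {n : ℕ} (X : Matrix (Fin n) (Fin n) ℂ) (i j : Fin n) :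
    (X * shiftMat n) i j =
      if h : 1 ≤ (j : ℕ) then X i ⟨(j : ℕ) - 1, lt_of_le_of_lt (Nat.sub_le _ _) j.isLt⟩
      else 0 := by
  rw [Matrix.mul_apply]
  split_ifs with h
  · rw [Finset.sum_eq_single (⟨(j : ℕ) - 1, lt_of_le_of_lt (Nat.sub_le _ _) j.isLt⟩ : Fin n)]
    · have h1 : shiftMat n ⟨(j : ℕ) - 1, lt_of_le_of_lt (Nat.sub_le _ _) j.isLt⟩ j = 1 := by
        simp only [shiftMat, Matrix.of_apply]
        rw [if_pos (by omega)]
      rw [h1, mul_one]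
    · intro b _ hb
      have h1 : shiftMat n b j = 0 := by
        simp only [shiftMat, Matrix.of_apply]
        rw [if_neg]
        intro hc
        exact hb (Fin.ext (by simp; omega))
      rw [h1, mul_zero]
    · intro hmem; exact absurd (Finset.mem_univ _) hmem
  · apply Finset.sum_eq_zero
    intro b _
    have h1 : shiftMat n b j = 0 := by
      simp only [shiftMat, Matrix.of_apply]
      rw [if_neg (by omega)]
    rw [h1, mul_zero]

lemma shift_mul_apply {n : ℕ} (X : Matrix (Fin n) (Fin n) ℂ) (i j : Fin n) :
    (shiftMat n * X) i j = if h : (i : ℕ) + 1 < n then X ⟨(i : ℕ) + 1, h⟩ j else 0 := by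
  rw [Matrix.mul_apply]
  split_ifs with h
  · rw [Finset.sum_eq_single (⟨(i : ℕ) + 1, h⟩ : Fin n)]
    · have h1 : shiftMat n i ⟨(i : ℕ) + 1, h⟩ = 1 := by
        simp only [shiftMat, Matrix.of_apply]
        rw [if_pos (by simp)]
      rw [h1, one_mul]
    · intro b _ hb
      have h1 : shiftMat n i b = 0 := by
        simp only [shiftMat, Matrix.of_apply]
        rw [if_neg]
        intro hc
        exact hb (Fin.ext (by simpa using hc))
      rw [h1, zero_mul]
    · intro hmem; exact absurd (Finset.mem_univ _) hmem
  · apply Finset.sum_eq_zero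
    intro b _
    have h1 : shiftMat n i b = 0 := by
      simp only [shiftMat, Matrix.of_apply]
      rw [if_neg (by omega)]
    rw [h1, zero_mul]

noncomputable def entry (m : ℕ) (X : Matrix (Fin (2*m+1)) (Fin (2*m+1)) ℂ) (i j : ℕ) : ℂ :=
  if h : i < 2*m+1 ∧ j < 2*m+1 then X ⟨i, h.1⟩ ⟨j, h.2⟩ else 0

lemma entry_eq (m : ℕ) (X : Matrix (Fin (2*m+1)) (Fin (2*m+1)) ℂ) {i j : ℕ}
    (hi : i < 2*m+1) (hj : j < 2*m+1) : entry m X i j = X ⟨i, hi⟩ ⟨j, hj⟩ := by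
  simp [entry, hi, hj]

lemma eq_entry (m : ℕ) (X : Matrix (Fin (2*m+1)) (Fin (2*m+1)) ℂ) (i j : Fin (2*m+1)) :
    X i j = entry m X i j := by
  simp [entry, i.isLt, j.isLt]

section rels
variable {m : ℕ} {X : Matrix (Fin (2*m+1)) (Fin (2*m+1)) ℂ}
  (hX : Xᵀ * shiftMat (2*m+1) + shiftMat (2*m+1) * X = 0)

include hX

lemma rrec' (i j : ℕ) (hi : i + 1 < 2*m+1) (hj : j + 1 < 2*m+1) :
    entry m X (i+1) (j+1) = - entry m X j i := by
  have h0 := congrFun (congrFun hX ⟨i, by omega⟩) ⟨j+1, hj⟩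
  rw [Matrix.add_apply, Matrix.zero_apply, mul_shift_apply, shift_mul_apply,
    dif_pos (show 1 ≤ ((⟨j+1, hj⟩ : Fin (2*m+1)) : ℕ) from by simp),
    dif_pos (show ((⟨i, by omega⟩ : Fin (2*m+1)) : ℕ) + 1 < 2*m+1 from by simpa using hi),
    Matrix.transpose_apply] at h0
  simp only [Fin.val_mk, Nat.add_sub_cancel] at h0
  rw [entry_eq m X (by omega) hj, entry_eq m X (by omega : j < 2*m+1) (by omega : i < 2*m+1)]
  linear_combination h0

lemma rcol0 (i : ℕ) (hi : i + 1 < 2*m+1) : entry m X (i+1) 0 = 0 := by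
  have h0 := congrFun (congrFun hX ⟨i, by omega⟩) ⟨0, by omega⟩
  rw [Matrix.add_apply, Matrix.zero_apply, mul_shift_apply, shift_mul_apply,
    dif_neg (show ¬ (1 ≤ ((⟨0, by omega⟩ : Fin (2*m+1)) : ℕ)) from by simp),
    dif_pos (show ((⟨i, by omega⟩ : Fin (2*m+1)) : ℕ) + 1 < 2*m+1 from by simpa using hi)] at h0
  rw [entry_eq m X hi (by omega)]
  linear_combination h0

lemma rlast (j : ℕ) (hj : j + 1 < 2*m+1) : entry m X j (2*m) = 0 := by
  have h0 := congrFun (congrFun hX ⟨2*m, by omega⟩) ⟨j+1, hj⟩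
  rw [Matrix.add_apply, Matrix.zero_apply, mul_shift_apply, shift_mul_apply,
    dif_pos (show 1 ≤ ((⟨j+1, hj⟩ : Fin (2*m+1)) : ℕ) from by simp),
    dif_neg (show ¬(((⟨2*m, by omega⟩ : Fin (2*m+1)) : ℕ) + 1 < 2*m+1) from by simp),
    Matrix.transpose_apply] at h0
  simp only [Fin.val_mk, Nat.add_sub_cancel] at h0
  rw [entry_eq m X (by omega) (by omega : 2*m < 2*m+1)]
  linear_combination h0

end rels

section derived
variable {m : ℕ} {X : Matrix (Fin (2*m+1)) (Fin (2*m+1)) ℂ}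
  (hX : Xᵀ * shiftMat (2*m+1) + shiftMat (2*m+1) * X = 0)

include hX

lemma rdiag2 (i j : ℕ) (hi : i + 2 < 2*m+1) (hj : j + 2 < 2*m+1) :
    entry m X (i+2) (j+2) = entry m X i j := by
  rw [show i+2 = (i+1)+1 from rfl, show j+2 = (j+1)+1 from rfl,
    rrec' hX (i+1) (j+1) (by omega) (by omega),
    rrec' hX j i (by omega) (by omega), neg_neg]

lemma rclimb (s i j : ℕ) (hij : i ≤ j) (h : j + 2*s < 2*m+1) :
    entry m X (i + 2*s) (j + 2*s) = entry m X i j := by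
  induction s with
  | zero => norm_num
  | succ s ih =>
      have h1 : i + 2*(s+1) = (i + 2*s) + 2 := by ring
      have h2 : j + 2*(s+1) = (j + 2*s) + 2 := by ring
      rw [h1, h2, rdiag2 hX _ _ (by omega) (by omega)]
      exact ih (by omega)

lemma x0_even (t : ℕ) (ht2 : 2 ≤ t) (hte : t % 2 = 0) (htn : t < 2*m+1) :
    entry m X 0 t = 0 := by
  have hs : t + 2*((2*m - t)/2) = 2*m := by omega
  have hc := rclimb hX ((2*m - t)/2) 0 t (by omega) (by omega)
  rw [hs, Nat.zero_add] at hc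
  rw [← hc]
  exact rlast hX _ (by omega)

lemma row1 (j : ℕ) (h2 : 2 ≤ j) (hj : j < 2*m+1) : entry m X 1 j = 0 := by
  have h1 := rrec' hX 0 (j-1) (by omega) (by omega)
  rw [show (j-1)+1 = j by omega] at h1
  have h0 := rcol0 hX (j-2) (by omega)
  rw [show (j-2)+1 = j-1 by omega] at h0
  rw [show (1:ℕ) = 0 + 1 from rfl, h1, h0, neg_zero]

lemma lup (i : ℕ) : ∀ j, i < j → j < 2*m+1 →
    entry m X i j = if i % 2 = 0 then entry m X 0 (j - i) else 0 := by
  induction i using Nat.strong_induction_on with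
  | _ i ih =>
    intro j hij hj
    match i with
    | 0 => simp
    | 1 => rw [row1 hX j (by omega) hj]; norm_num
    | (i+2) =>
        have h1 : entry m X (i+2) j = entry m X i (j-2) := by
          have := rdiag2 hX i (j-2) (by omega) (by omega)
          rw [show (j-2)+2 = j by omega] at this
          exact this
        rw [h1, ih i (by omega) (j-2) (by omega) (by omega),
          show (j-2) - i = j - (i+2) by omega, show i % 2 = (i+2) % 2 by omega]

lemma ldiagonal (i : ℕ) (hi : i < 2*m+1) : entry m X i i = (-1)^i * entry m X 0 0 := by
  induction i with
  | zero => norm_num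
  | succ i ih =>
      rw [rrec' hX i i (by omega) (by omega), ih (by omega)]
      ring

lemma llow (i j : ℕ) (hji : j < i) (hi : i < 2*m+1) :
    entry m X i j = if j % 2 = 1 ∧ (i-j) % 2 = 1 then -entry m X 0 (i-j) else 0 := by
  match j with
  | 0 =>
      have h0 := rcol0 hX (i-1) (by omega)
      rw [show (i-1)+1 = i by omega] at h0
      rw [h0, if_neg (by omega)]
  | (j+1) =>
      have h1 := rrec' hX (i-1) j (by omega) (by omega)
      rw [show (i-1)+1 = i by omega] at h1
      rw [h1, lup hX j (i-1) (by omega) (by omega),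
        show (i-1) - j = i - (j+1) by omega]
      by_cases hj2 : (j+1) % 2 = 1
      · rw [if_pos (by omega)]
        by_cases hd : (i-(j+1)) % 2 = 1
        · rw [if_pos ⟨hj2, hd⟩]
        · rw [if_neg (by tauto),
            x0_even hX (i-(j+1)) (by omega) (by omega) (by omega), neg_zero]
      · rw [if_neg (by omega), if_neg (by tauto), neg_zero]

lemma char (i j : ℕ) (hi : i < 2*m+1) (hj : j < 2*m+1) :
    entry m X i j =
      if i = j then (-1)^i * entry m X 0 0
      else if i < j then
        (if i % 2 = 0 ∧ (j-i) % 2 = 1 then entry m X 0 (j-i) else 0)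
      else (if j % 2 = 1 ∧ (i-j) % 2 = 1 then -entry m X 0 (i-j) else 0) := by
  rcases lt_trichotomy i j with h | h | h
  · rw [if_neg (by omega), if_pos h, lup hX i j h hj]
    by_cases hie : i % 2 = 0
    · rw [if_pos hie]
      by_cases hd : (j-i) % 2 = 1
      · rw [if_pos ⟨hie, hd⟩]
      · rw [if_neg (by tauto), x0_even hX (j-i) (by omega) (by omega) (by omega)]
    · rw [if_neg hie, if_neg (by tauto)]
  · subst h; rw [if_pos rfl]; exact ldiagonal hX i hi
  · rw [if_neg (by omega), if_neg (by omega)]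
    exact llow hX i j h hi

end derived

lemma hMat_apply (n : ℕ) (i j : Fin n) :
    hMat n i j = if (i : ℕ) = (j : ℕ) then (-1 : ℂ)^(i : ℕ) else 0 := by
  rw [hMat, Matrix.sum_apply]
  simp only [Matrix.smul_apply, Matrix.single, Matrix.of_apply, smul_eq_mul, mul_ite,
    mul_one, mul_zero]
  by_cases hij : i = j
  · subst hij
    rw [if_pos rfl, Finset.sum_eq_single i]
    · rw [if_pos ⟨rfl, rfl⟩]
    · intro b _ hb
      exact if_neg (by tauto)
    · intro hmem; exact absurd (Finset.mem_univ _) hmem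
  · rw [if_neg (fun h => hij (Fin.ext h))]
    apply Finset.sum_eq_zero
    intro b _
    refine if_neg ?_
    rintro ⟨rfl, rfl⟩
    exact hij rfl

lemma eMat_apply (m k : ℕ) (hk1 : 1 ≤ k) (hk2 : k ≤ m) (i j : Fin (2*m+1)) :
    eMatOdd m k i j =
      if (i : ℕ) % 2 = 0 ∧ (j : ℕ) + 1 = (i : ℕ) + 2*k then 1
      else if (j : ℕ) % 2 = 1 ∧ (i : ℕ) + 1 = (j : ℕ) + 2*k then -1
      else 0 := by
  have hi := i.isLt
  have hj := j.isLt
  rw [eMatOdd, dif_pos ⟨hk1, hk2⟩, Matrix.sum_apply]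
  simp only [Matrix.sub_apply, Matrix.single, Matrix.of_apply, Fin.ext_iff, Fin.val_mk]
  by_cases hA : (i : ℕ) % 2 = 0 ∧ (j : ℕ) + 1 = (i : ℕ) + 2*k
  · obtain ⟨hA1, hA2⟩ := hA
    rw [if_pos ⟨hA1, hA2⟩, Finset.sum_eq_single (⟨(i : ℕ)/2, by omega⟩ : Fin (m-k+1))]
    · simp only [Fin.val_mk]
      rw [if_pos ⟨by omega, by omega⟩, if_neg (by omega)]
      norm_num
    · intro b _ hb
      have hb' : (b : ℕ) ≠ (i : ℕ)/2 := fun h => hb (Fin.ext (by simpa using h))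
      rw [if_neg (by omega), if_neg (by omega)]
      norm_num
    · intro hmem; exact absurd (Finset.mem_univ _) hmem
  · by_cases hB : (j : ℕ) % 2 = 1 ∧ (i : ℕ) + 1 = (j : ℕ) + 2*k
    · obtain ⟨hB1, hB2⟩ := hB
      rw [if_neg hA, if_pos ⟨hB1, hB2⟩,
        Finset.sum_eq_single (⟨((j : ℕ)-1)/2, by omega⟩ : Fin (m-k+1))]
      · simp only [Fin.val_mk]
        rw [if_neg (by omega), if_pos ⟨by omega, by omega⟩]
        norm_num
      · intro b _ hb
        have hb' : (b : ℕ) ≠ ((j : ℕ)-1)/2 := fun h => hb (Fin.ext (by simpa using h))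
        rw [if_neg (by omega), if_neg (by omega)]
        norm_num
      · intro hmem; exact absurd (Finset.mem_univ _) hmem
    · rw [if_neg hA, if_neg hB]
      apply Finset.sum_eq_zero
      intro b _
      push_neg at hA hB
      rw [if_neg (by omega), if_neg (by omega)]
      norm_num

lemma h_sol (n : ℕ) : (hMat n)ᵀ * shiftMat n + shiftMat n * hMat n = 0 := by
  ext i j
  have hi := i.isLt
  have hj := j.isLt
  rw [Matrix.add_apply, Matrix.zero_apply, mul_shift_apply, shift_mul_apply]
  split_ifs with h1 h2 h2
  · rw [Matrix.transpose_apply, hMat_apply, hMat_apply]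
    simp only [Fin.val_mk]
    by_cases hc : (j : ℕ) - 1 = (i : ℕ)
    · rw [if_pos hc, if_pos (by omega), hc, pow_succ]
      ring
    · rw [if_neg hc, if_neg (by omega), add_zero]
  · rw [Matrix.transpose_apply, hMat_apply]
    simp only [Fin.val_mk]
    rw [if_neg (by omega), add_zero]
  · rw [hMat_apply]
    simp only [Fin.val_mk]
    rw [if_neg (by omega), zero_add]
  · rw [add_zero]

lemma e_sol (m k : ℕ) (hk1 : 1 ≤ k) (hk2 : k ≤ m) :
    (eMatOdd m k)ᵀ * shiftMat (2*m+1) + shiftMat (2*m+1) * eMatOdd m k = 0 := by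
  ext i j
  have hi := i.isLt
  have hj := j.isLt
  rw [Matrix.add_apply, Matrix.zero_apply, mul_shift_apply, shift_mul_apply]
  split_ifs with h1 h2 h2
  · rw [Matrix.transpose_apply, eMat_apply m k hk1 hk2, eMat_apply m k hk1 hk2]
    simp only [Fin.val_mk]
    split_ifs <;> first | omega | norm_num
  · rw [Matrix.transpose_apply, eMat_apply m k hk1 hk2, add_zero]
    simp only [Fin.val_mk]
    split_ifs <;> first | omega | norm_num
  · rw [eMat_apply m k hk1 hk2, zero_add]
    simp only [Fin.val_mk]
    split_ifs <;> first | omega | norm_num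
  · rw [add_zero]

/-- For odd `n = 2m+1 ≥ 3`, the solution space of `Xᵀ A_n + A_n X = 0`
is the linear span of `h, e_1, …, e_m`. -/
theorem stmt_10 (m : ℕ) (hm : 1 ≤ m) :
    {X : Matrix (Fin (2 * m + 1)) (Fin (2 * m + 1)) ℂ |
        Xᵀ * shiftMat (2 * m + 1) + shiftMat (2 * m + 1) * X = 0} =
      ↑(Submodule.span ℂ
        (insert (hMat (2 * m + 1)) {M | ∃ kk, 1 ≤ kk ∧ kk ≤ m ∧ M = eMatOdd m kk})) := by
  ext X
  simp only [Set.mem_setOf_eq, SetLike.mem_coe]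
  constructor
  · intro hX
    have hXeq : X = entry m X 0 0 • hMat (2*m+1) +
        ∑ k ∈ Finset.Icc 1 m, entry m X 0 (2*k-1) • eMatOdd m k := by
      ext i j
      have hi := i.isLt
      have hj := j.isLt
      rw [Matrix.add_apply, Matrix.smul_apply, hMat_apply, Matrix.sum_apply, eq_entry m X i j,
        char hX (i : ℕ) (j : ℕ) hi hj,
        Finset.sum_congr rfl (fun k hk => by
          rw [Matrix.smul_apply,
            eMat_apply m k (Finset.mem_Icc.mp hk).1 (Finset.mem_Icc.mp hk).2 i j])]
      rcases lt_trichotomy (i : ℕ) (j : ℕ) with h | h | h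
      · rw [if_neg (show ¬((i:ℕ) = (j:ℕ)) by omega), if_pos h,
          if_neg (show ¬((i:ℕ) = (j:ℕ)) by omega), smul_zero, zero_add]
        by_cases hc : (i : ℕ) % 2 = 0 ∧ ((j : ℕ) - (i : ℕ)) % 2 = 1
        · rw [if_pos hc,
            Finset.sum_eq_single_of_mem (((j : ℕ) - (i : ℕ) + 1)/2)
              (Finset.mem_Icc.mpr ⟨by omega, by omega⟩)]
          · rw [if_pos ⟨hc.1, by omega⟩,
              show 2*(((j : ℕ) - (i : ℕ) + 1)/2) - 1 = (j : ℕ) - (i : ℕ) by omega,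
              smul_eq_mul, mul_one]
          · intro b hb hbne
            have hb' := Finset.mem_Icc.mp hb
            rw [if_neg (by omega), if_neg (by omega), smul_zero]
        · rw [if_neg hc,
            Finset.sum_eq_zero (fun k hk => by
              have hk' := Finset.mem_Icc.mp hk
              rw [if_neg (by omega), if_neg (by omega), smul_zero])]
      · rw [if_pos h, if_pos h,
          Finset.sum_eq_zero (fun k hk => by
            have hk' := Finset.mem_Icc.mp hk
            rw [if_neg (by omega), if_neg (by omega), smul_zero]),
          add_zero, smul_eq_mul]
        ring
      · rw [if_neg (show ¬((i:ℕ) = (j:ℕ)) by omega), if_neg (show ¬((i:ℕ) < (j:ℕ)) by omega),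
          if_neg (show ¬((i:ℕ) = (j:ℕ)) by omega), smul_zero, zero_add]
        by_cases hc : (j : ℕ) % 2 = 1 ∧ ((i : ℕ) - (j : ℕ)) % 2 = 1
        · rw [if_pos hc,
            Finset.sum_eq_single_of_mem (((i : ℕ) - (j : ℕ) + 1)/2)
              (Finset.mem_Icc.mpr ⟨by omega, by omega⟩)]
          · rw [if_neg (by omega), if_pos ⟨hc.1, by omega⟩,
              show 2*(((i : ℕ) - (j : ℕ) + 1)/2) - 1 = (i : ℕ) - (j : ℕ) by omega,
              smul_eq_mul, mul_neg_one]
          · intro b hb hbne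
            have hb' := Finset.mem_Icc.mp hb
            rw [if_neg (by omega), if_neg (by omega), smul_zero]
        · rw [if_neg hc,
            Finset.sum_eq_zero (fun k hk => by
              have hk' := Finset.mem_Icc.mp hk
              rw [if_neg (by omega), if_neg (by omega), smul_zero])]
    rw [hXeq]
    refine Submodule.add_mem _
      (Submodule.smul_mem _ _ (Submodule.subset_span (Set.mem_insert _ _)))
      (Submodule.sum_mem _ (fun k hk => Submodule.smul_mem _ _ (Submodule.subset_span ?_)))
    exact Set.mem_insert_iff.mpr
      (Or.inr ⟨k, (Finset.mem_Icc.mp hk).1, (Finset.mem_Icc.mp hk).2, rfl⟩)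
  · intro hX
    induction hX using Submodule.span_induction with
    | mem M hM =>
        simp only [Set.mem_insert_iff, Set.mem_setOf_eq] at hM
        rcases hM with rfl | ⟨k, hk1, hk2, rfl⟩
        · exact h_sol _
        · exact e_sol m k hk1 hk2
    | zero => simp
    | add A B hA hB ihA ihB =>
        rw [Matrix.transpose_add, Matrix.add_mul, Matrix.mul_add,
          show Aᵀ * shiftMat (2*m+1) + Bᵀ * shiftMat (2*m+1) +
              (shiftMat (2*m+1) * A + shiftMat (2*m+1) * B) =
            (Aᵀ * shiftMat (2*m+1) + shiftMat (2*m+1) * A) +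
              (Bᵀ * shiftMat (2*m+1) + shiftMat (2*m+1) * B) from by abel,
          ihA, ihB, add_zero]
    | smul c A hA ihA =>
        rw [Matrix.transpose_smul, Matrix.smul_mul, Matrix.mul_smul, ← smul_add, ihA, smul_zero]
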